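/- arXiv:1903.00272 — 2 statements merged into one kernel-verified Lean document; each statement's English description precedes it below -/
import Mathlib

section
/- Let M be a forest (a possibly infinite acyclic simple graph), A a finite set of vertices with A ≤* M (i.e., A is closed in every finite superset of A inside M), and b̄ a finite set of vertices with A ∩ b̄ = ∅. Then A ∩ cl*_M(b̄) = ∅. -/
open SimpleGraph

/-- The predimension of a finite set `A` of vertices: `|A| - e(A)`, where `e(A)` is the
number of edges of the induced subgraph on `A`. -/
noncomputable def delta {V : Type*} (G : SimpleGraph V) (A : Finset V) : ℤ :=
  (A.card : ℤ) - (Nat.card (G.induce (A : Set V)).edgeSet : ℤ)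

/-- `A` is closed in `B` (`A ≤* B`): `A ⊆ B` and `δ(C) > δ(A)` for every finite `C` with
`A ⊊ C ⊆ B`. -/
def Closed {V : Type*} (G : SimpleGraph V) (A B : Finset V) : Prop :=
  A ⊆ B ∧ ∀ C : Finset V, A ⊂ C → C ⊆ B → delta G A < delta G C

/-- `A` is weakly closed in `B` (`A ≤ B`). -/
def WClosed {V : Type*} (G : SimpleGraph V) (A B : Finset V) : Prop :=
  A ⊆ B ∧ ∀ C : Finset V, A ⊆ C → C ⊆ B → delta G A ≤ delta G C

/-- `A ≤* M` : `A` is closed in every finite superset inside the graph. -/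
def ClosedIn {V : Type*} (G : SimpleGraph V) (A : Finset V) : Prop :=
  ∀ B : Finset V, A ⊆ B → Closed G A B

def WClosedIn {V : Type*} (G : SimpleGraph V) (A : Finset V) : Prop :=
  ∀ B : Finset V, A ⊆ B → WClosed G A B

/-- `(A,B)` is a minimal pair. -/
def MinPair {V : Type*} (G : SimpleGraph V) (A B : Finset V) : Prop :=
  A ⊆ B ∧ (∀ C : Finset V, A ⊆ C → C ⊂ B → Closed G A C) ∧ ¬ Closed G A B

def WMinPair {V : Type*} (G : SimpleGraph V) (A B : Finset V) : Prop :=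
  A ⊆ B ∧ (∀ C : Finset V, A ⊆ C → C ⊂ B → WClosed G A C) ∧ ¬ WClosed G A B

/-- `B` is an intrinsic extension of `A`. -/
def IntrinsicExt {V : Type*} (G : SimpleGraph V) (A B : Finset V) : Prop :=
  A ⊆ B ∧ ∀ C : Finset V, A ⊆ C → C ⊂ B → ¬ Closed G C B

def WIntrinsicExt {V : Type*} (G : SimpleGraph V) (A B : Finset V) : Prop :=
  A ⊆ B ∧ ∀ C : Finset V, A ⊆ C → C ⊂ B → ¬ WClosed G C B

/-- The closure `cl*_M(N)`. -/
def clStar {V : Type*} (G : SimpleGraph V) (N : Set V) : Set V :=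
  {b | ∃ A E : Finset V, (A : Set V) ⊆ N ∧ IntrinsicExt G A E ∧ b ∈ E}

/-- The weak closure `cl_M(N)`. -/
def clWeak {V : Type*} (G : SimpleGraph V) (N : Set V) : Set V :=
  {b | ∃ A E : Finset V, (A : Set V) ⊆ N ∧ WIntrinsicExt G A E ∧ b ∈ E}


section Aux

variable {V : Type*}

open Classical in
/-- Edges of `G` with both endpoints in the finset `S`. -/
noncomputable def edgesIn (G : SimpleGraph V) (S : Finset V) : Finset (Sym2 V) :=
  S.sym2.filter (· ∈ G.edgeSet)

lemma mem_edgesIn {G : SimpleGraph V} {S : Finset V} {e : Sym2 V} :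
    e ∈ edgesIn G S ↔ (∀ a ∈ e, a ∈ S) ∧ e ∈ G.edgeSet := by
  classical
  simp [edgesIn, Finset.mem_sym2_iff]

lemma edgesIn_mono {G : SimpleGraph V} {S T : Finset V} (h : S ⊆ T) :
    edgesIn G S ⊆ edgesIn G T := by
  intro e he
  rw [mem_edgesIn] at he ⊢
  exact ⟨fun a ha => h (he.1 a ha), he.2⟩

lemma ncard_edge (G : SimpleGraph V) (S : Finset V) :
    Nat.card (G.induce (S : Set V)).edgeSet = (edgesIn G S).card := by
  classical
  rw [← Nat.card_eq_finsetCard]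
  refine Nat.card_congr (Equiv.ofBijective (fun e => ⟨Sym2.map Subtype.val e.1, ?_⟩) ⟨?_, ?_⟩)
  · obtain ⟨e, he⟩ := e
    induction e using Sym2.ind with
    | _ a b =>
      rw [mem_edgeSet] at he
      simp only [Sym2.map_pair_eq, mem_edgesIn]
      constructor
      · intro x hx
        rw [Sym2.mem_iff] at hx
        rcases hx with rfl | rfl
        · exact a.2
        · exact b.2
      · exact (mem_edgeSet _).mpr he
  · intro e1 e2 h
    apply Subtype.ext
    exact Sym2.map.injective Subtype.val_injective (congrArg Subtype.val h)
  · rintro ⟨e, he⟩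
    rw [mem_edgesIn] at he
    obtain ⟨hmem, hedge⟩ := he
    induction e using Sym2.ind with
    | _ a b =>
      have ha : a ∈ S := hmem a (Sym2.mem_mk_left a b)
      have hb : b ∈ S := hmem b (Sym2.mem_mk_right a b)
      refine ⟨⟨s(⟨a, by simpa using ha⟩, ⟨b, by simpa using hb⟩), ?_⟩, ?_⟩
      · rw [mem_edgeSet]
        exact (mem_edgeSet _).mp hedge
      · apply Subtype.ext
        simp [Sym2.map_pair_eq]

lemma delta_eq (G : SimpleGraph V) (S : Finset V) :
    delta G S = (S.card : ℤ) - ((edgesIn G S).card : ℤ) := by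
  rw [delta, ncard_edge]

end Aux

section Aux2

variable {V : Type*}

lemma isAcyclic_anti {G H : SimpleGraph V} (hle : H ≤ G) (hG : G.IsAcyclic) :
    H.IsAcyclic := by
  intro v p hp
  exact hG (p.mapLe hle) (hp.mapLe hle)

open Classical in
lemma edgesIn_union {G : SimpleGraph V} {S T : Finset V}
    (h : ∀ u v, G.Adj u v → u ∈ S → v ∈ T → False) :
    edgesIn G (S ∪ T) = edgesIn G S ∪ edgesIn G T := by
  classical
  apply Finset.Subset.antisymm
  · intro e he
    revert he
    induction e using Sym2.ind with
    | _ a b =>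
      intro he
      rw [mem_edgesIn] at he
      obtain ⟨hmem, hedge⟩ := he
      have ha := hmem a (Sym2.mem_mk_left a b)
      have hb := hmem b (Sym2.mem_mk_right a b)
      have hadj : G.Adj a b := (mem_edgeSet _).mp hedge
      have hpair : ∀ x, x ∈ s(a, b) → x = a ∨ x = b := fun x hx => Sym2.mem_iff.mp hx
      have key : (a ∈ S ∧ b ∈ S) ∨ (a ∈ T ∧ b ∈ T) := by
        rcases Finset.mem_union.mp ha with ha' | ha' <;>
          rcases Finset.mem_union.mp hb with hb' | hb'
        · exact Or.inl ⟨ha', hb'⟩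
        · exact absurd (h a b hadj ha' hb') (fun c => c)
        · exact absurd (h b a hadj.symm hb' ha') (fun c => c)
        · exact Or.inr ⟨ha', hb'⟩
      rcases key with ⟨h1, h2⟩ | ⟨h1, h2⟩
      · apply Finset.mem_union_left
        rw [mem_edgesIn]
        refine ⟨fun x hx => ?_, hedge⟩
        rcases hpair x hx with rfl | rfl
        exacts [h1, h2]
      · apply Finset.mem_union_right
        rw [mem_edgesIn]
        refine ⟨fun x hx => ?_, hedge⟩
        rcases hpair x hx with rfl | rfl
        exacts [h1, h2]
  · intro e he
    rcases Finset.mem_union.mp he with he | he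
    · exact edgesIn_mono Finset.subset_union_left he
    · exact edgesIn_mono Finset.subset_union_right he

lemma forest_bound_aux : ∀ n (G : SimpleGraph V), G.IsAcyclic →
    ∀ S : Finset V, (edgesIn G S).card = n → S.Nonempty → (edgesIn G S).card < S.card := by
  intro n
  induction n using Nat.strong_induction_on with
  | _ n ih =>
    intro G hG S hcard hS
    classical
    rcases Nat.eq_zero_or_pos n with h0 | hpos
    · rw [hcard, h0]; exact hS.card_pos
    have hne : (edgesIn G S).Nonempty := by
      rw [← Finset.card_pos, hcard]; exact hpos
    obtain ⟨e, he⟩ := hne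
    revert he
    induction e using Sym2.ind with
    | _ u v =>
      intro he
      rw [mem_edgesIn] at he
      obtain ⟨hmem, hedge⟩ := he
      have hu : u ∈ S := hmem u (Sym2.mem_mk_left u v)
      have hv : v ∈ S := hmem v (Sym2.mem_mk_right u v)
      have hadj : G.Adj u v := (mem_edgeSet _).mp hedge
      set H : SimpleGraph V := G.deleteEdges {s(u, v)} with hH
      have hHle : H ≤ G := sdiff_le
      have hHac : H.IsAcyclic := isAcyclic_anti hHle hG
      have hbridge : ¬ H.Reachable u v := by
        have := (isAcyclic_iff_forall_edge_isBridge.mp hG) hedge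
        exact isBridge_iff.mp this
      -- edges of H in S = edges of G in S minus the edge
      have hHE : edgesIn H S = (edgesIn G S).erase s(u, v) := by
        classical
        ext e
        rw [Finset.mem_erase, mem_edgesIn, mem_edgesIn, hH, edgeSet_deleteEdges,
          Set.mem_diff, Set.mem_singleton_iff]
        tauto
      have hHEcard : (edgesIn H S).card = n - 1 := by
        rw [hHE, Finset.card_erase_of_mem (by rw [mem_edgesIn]; exact ⟨hmem, hedge⟩), hcard]
      classical
      set S1 : Finset V := S.filter (fun x => H.Reachable u x) with hS1
      set S2 : Finset V := S \ S1 with hS2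
      have hS1sub : S1 ⊆ S := Finset.filter_subset _ _
      have hSU : S1 ∪ S2 = S := Finset.union_sdiff_of_subset hS1sub
      have huS1 : u ∈ S1 := by rw [hS1, Finset.mem_filter]; exact ⟨hu, Reachable.refl u⟩
      have hvS2 : v ∈ S2 := by
        rw [hS2, Finset.mem_sdiff, hS1, Finset.mem_filter]
        exact ⟨hv, fun h => hbridge h.2⟩
      have hcross : ∀ x y, H.Adj x y → x ∈ S1 → y ∈ S2 → False := by
        intro x y hxy hx hy
        rw [hS1, Finset.mem_filter] at hx
        rw [hS2, Finset.mem_sdiff, hS1, Finset.mem_filter] at hy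
        exact hy.2 ⟨hy.1, hx.2.trans hxy.reachable⟩
      have hsplit : edgesIn H S = edgesIn H S1 ∪ edgesIn H S2 := by
        rw [← hSU]; exact edgesIn_union hcross
      have h1le : (edgesIn H S1).card ≤ n - 1 := by
        rw [← hHEcard]
        exact Finset.card_le_card (edgesIn_mono hS1sub)
      have h2le : (edgesIn H S2).card ≤ n - 1 := by
        rw [← hHEcard]
        exact Finset.card_le_card (edgesIn_mono (Finset.sdiff_subset))
      have ih1 : (edgesIn H S1).card < S1.card :=
        ih _ (by omega) H hHac S1 rfl ⟨u, huS1⟩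
      have ih2 : (edgesIn H S2).card < S2.card :=
        ih _ (by omega) H hHac S2 rfl ⟨v, hvS2⟩
      have hcards : S1.card + S2.card = S.card := by
        rw [← hSU]
        exact (Finset.card_union_of_disjoint Finset.disjoint_sdiff).symm
      have hsum : n - 1 ≤ (edgesIn H S1).card + (edgesIn H S2).card := by
        rw [← hHEcard, hsplit]
        exact Finset.card_union_le _ _
      omega

lemma forest_delta_pos {G : SimpleGraph V} (hG : G.IsAcyclic) {S : Finset V}
    (hS : S.Nonempty) : 1 ≤ delta G S := by
  rw [delta_eq]
  have := forest_bound_aux _ G hG S rfl hS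
  omega

/-- A set closed in the whole graph has no edges leaving it. -/
lemma closedIn_no_edge {G : SimpleGraph V} {A : Finset V} (hA : ClosedIn G A) :
    ∀ v w, v ∈ A → w ∉ A → ¬ G.Adj v w := by
  classical
  intro v w hv hw hadj
  have h := (hA (insert w A) (Finset.subset_insert _ _)).2 (insert w A)
    (Finset.ssubset_insert hw) (le_refl _)
  have hcard : (insert w A).card = A.card + 1 := Finset.card_insert_of_notMem hw
  have hmemE : s(v, w) ∈ edgesIn G (insert w A) := by
    rw [mem_edgesIn]
    constructor
    · intro a ha
      rw [Sym2.mem_iff] at ha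
      rcases ha with rfl | rfl
      · exact Finset.mem_insert_of_mem hv
      · exact Finset.mem_insert_self _ _
    · exact (mem_edgeSet _).mpr hadj
  have hnot : s(v, w) ∉ edgesIn G A := by
    rw [mem_edgesIn]
    intro hc
    exact hw (hc.1 w (Sym2.mem_mk_right v w))
  have hsub : insert s(v, w) (edgesIn G A) ⊆ edgesIn G (insert w A) := by
    intro e he2
    rcases Finset.mem_insert.mp he2 with rfl | hin
    · exact hmemE
    · exact edgesIn_mono (Finset.subset_insert _ _) hin
  have hEcard : (edgesIn G A).card + 1 ≤ (edgesIn G (insert w A)).card := by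
    calc (edgesIn G A).card + 1 = (insert s(v, w) (edgesIn G A)).card :=
          (Finset.card_insert_of_notMem hnot).symm
      _ ≤ _ := Finset.card_le_card hsub
  rw [delta_eq, delta_eq, hcard] at h
  push_cast at h
  omega

end Aux2

/-- Let `M` be a (possibly infinite) forest, `A` a finite set of vertices
with `A ≤* M`, and `b̄` a finite set of vertices with `A ∩ b̄ = ∅`. Then
`A ∩ cl*_M(b̄) = ∅`. -/
theorem stmt_9 {V : Type*} (G : SimpleGraph V) (hG : G.IsAcyclic) (A bbar : Finset V)
    (hA : ClosedIn G A) (hdisj : (A : Set V) ∩ (bbar : Set V) = ∅) :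
    (A : Set V) ∩ clStar G (bbar : Set V) = ∅ := by
  classical
  rw [Set.eq_empty_iff_forall_notMem]
  rintro x ⟨hxA, B, E, hBb, ⟨hBE, hint⟩, hxE⟩
  have hnoedge := closedIn_no_edge hA
  set C : Finset V := E \ A with hC
  have hBC : B ⊆ C := by
    intro b hb
    rw [hC, Finset.mem_sdiff]
    refine ⟨hBE hb, fun hbA => ?_⟩
    have hmem : (b : V) ∈ ((A : Set V) ∩ (bbar : Set V)) := ⟨hbA, hBb hb⟩
    rw [hdisj] at hmem
    exact hmem
  have hxA' : x ∈ A := hxA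
  have hCE : C ⊂ E := by
    refine Finset.ssubset_iff_of_subset Finset.sdiff_subset |>.mpr ?_
    exact ⟨x, hxE, fun hx => (Finset.mem_sdiff.mp hx).2 hxA'⟩
  apply hint C hBC hCE
  refine ⟨hCE.subset, fun D hCD hDE => ?_⟩
  set S : Finset V := D ∩ A with hS
  have hSne : S.Nonempty := by
    obtain ⟨y, hyD, hyC⟩ := Finset.exists_of_ssubset hCD
    have hyA : y ∈ A := by
      by_contra hcon
      exact hyC (Finset.mem_sdiff.mpr ⟨hDE hyD, hcon⟩)
    exact ⟨y, Finset.mem_inter.mpr ⟨hyD, hyA⟩⟩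
  have hDeq : C ∪ S = D := by
    apply Finset.Subset.antisymm
    · exact Finset.union_subset hCD.subset Finset.inter_subset_left
    · intro y hy
      by_cases hyA : y ∈ A
      · exact Finset.mem_union_right _ (Finset.mem_inter.mpr ⟨hy, hyA⟩)
      · exact Finset.mem_union_left _ (Finset.mem_sdiff.mpr ⟨hDE hy, hyA⟩)
  have hcross : ∀ p q, G.Adj p q → p ∈ C → q ∈ S → False := fun p q hpq hp hq =>
    hnoedge q p (Finset.mem_inter.mp hq).2 (Finset.mem_sdiff.mp hp).2 hpq.symm
  have hcd : Disjoint C S := by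
    rw [Finset.disjoint_left]
    intro y hyC hyS
    exact (Finset.mem_sdiff.mp hyC).2 (Finset.mem_inter.mp hyS).2
  have hcardD : D.card = C.card + S.card := by
    rw [← hDeq, Finset.card_union_of_disjoint hcd]
  have hedgeD : (edgesIn G D).card ≤ (edgesIn G C).card + (edgesIn G S).card := by
    rw [← hDeq, edgesIn_union hcross]
    exact Finset.card_union_le _ _
  have hdS := forest_delta_pos hG hSne
  rw [delta_eq] at hdS
  rw [delta_eq, delta_eq, hcardD]
  push_cast
  have hedgeD' : ((edgesIn G D).card : ℤ) ≤ (edgesIn G C).card + (edgesIn G S).card := by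
    exact_mod_cast hedgeD
  omega
end

section
/- For each m ∈ ω there is a first-order formula γ*_m(x₁,…,x_m) in the language with one binary relation R — namely ∀y(⋀_{i=1}^m y ≠ x_i → ⋀_{i=1}^m ¬R(x_i,y)) — such that for every forest M (a possibly infinite acyclic simple graph, viewed as a structure in this language) and every m-tuple ā of vertices of M: M ⊨ γ*_m(ā) if and only if the set of entries of ā is closed in M (ā ≤* M). -/
open SimpleGraph

open FirstOrder FirstOrder.Language

/-- The old (Lean 4.14-era Mathlib) `BoundedFormula.iInf` over a finset. -/
noncomputable def finsetIInf {L : Language} {α β : Type*} {n : ℕ} (s : Finset β)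
    (f : β → L.BoundedFormula α n) : L.BoundedFormula α n :=
  (s.toList.map f).foldr (· ⊓ ·) ⊤

/-- The formula `γ*_m(x₁,…,x_m) := ∀y(⋀_{i=1}^m y ≠ x_i → ⋀_{i=1}^m ¬R(x_i,y))` in the
language of graphs (one binary relation `R`, i.e. `adj`). -/
noncomputable def gammaStar (m : ℕ) : Language.graph.Formula (Fin m) :=
  BoundedFormula.all
    ((finsetIInf Finset.univ fun i : Fin m =>
        ∼(Term.bdEqual (&0) (Term.var (Sum.inl i)))) ⟹
      (finsetIInf Finset.univ fun i : Fin m =>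
        ∼(Relations.boundedFormula₂ adj (Term.var (Sum.inl i)) (&0))))

lemma realize_finsetIInf {L : Language} {M : Type*} [L.Structure M] {α β : Type*} {n : ℕ}
    (s : Finset β) (f : β → L.BoundedFormula α n) (v : α → M) (xs : Fin n → M) :
    (finsetIInf s f).Realize v xs ↔ ∀ b ∈ s, (f b).Realize v xs := by
  unfold finsetIInf
  have key : ∀ l : List β, ((l.map f).foldr (· ⊓ ·) ⊤).Realize v xs ↔
      ∀ b ∈ l, (f b).Realize v xs := by
    intro l
    induction l with
    | nil => simp
    | cons b l ih => simp [BoundedFormula.realize_inf, ih]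
  simpa using key s.toList


section Aux
variable {V : Type*} {G : SimpleGraph V}

/-- The set of edges of `G` with both endpoints in `A`, as a set of `Sym2 V`. -/
def ES (G : SimpleGraph V) (A : Finset V) : Set (Sym2 V) :=
  Sym2.map Subtype.val '' (G.induce (A : Set V)).edgeSet

lemma mem_ES {A : Finset V} {e : Sym2 V} :
    e ∈ ES G A ↔ ∃ x y, e = s(x, y) ∧ G.Adj x y ∧ x ∈ A ∧ y ∈ A := by
  constructor
  · rintro ⟨f, hf, rfl⟩
    induction f with
    | _ x y =>
      rw [SimpleGraph.mem_edgeSet] at hf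
      exact ⟨x.1, y.1, Sym2.map_pair_eq _ _ _, hf, by simp, by simp⟩
  · rintro ⟨x, y, rfl, hxy, hx, hy⟩
    refine ⟨s(⟨x, by simpa using hx⟩, ⟨y, by simpa using hy⟩), ?_, Sym2.map_pair_eq _ _ _⟩
    rw [SimpleGraph.mem_edgeSet]; exact hxy

lemma ES_finite (A : Finset V) : (ES G A).Finite :=
  Set.Finite.image _ (Set.toFinite _)

lemma card_ES (A : Finset V) : Nat.card (G.induce (A : Set V)).edgeSet = (ES G A).ncard := by
  rw [ES, Set.ncard_image_of_injective _ (Sym2.map.injective Subtype.val_injective),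
    Nat.card_coe_set_eq]

lemma delta_eq_s15 (A : Finset V) : delta G A = (A.card : ℤ) - ((ES G A).ncard : ℤ) := by
  rw [delta, card_ES]

lemma ES_mono {A B : Finset V} (h : A ⊆ B) : ES G A ⊆ ES G B := by
  intro e he
  rw [mem_ES] at he ⊢
  obtain ⟨x, y, rfl, hxy, hx, hy⟩ := he
  exact ⟨x, y, rfl, hxy, h hx, h hy⟩


lemma exists_leaf (hG : G.IsAcyclic) (D : Finset V) (hD : D.Nonempty) :
    ∃ v ∈ D, ∀ w₁ ∈ D, ∀ w₂ ∈ D, G.Adj v w₁ → G.Adj v w₂ → w₁ = w₂ := by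
  classical
  set S : Set ℕ := {n | ∃ (u v : V) (p : G.Walk u v), p.IsPath ∧ (∀ x ∈ p.support, x ∈ D) ∧
    p.length = n} with hS
  obtain ⟨v₀, hv₀⟩ := hD
  have hne : S.Nonempty := ⟨0, v₀, v₀, Walk.nil, by simp, by simp [hv₀], rfl⟩
  have hbdd : BddAbove S := by
    refine ⟨D.card, ?_⟩
    rintro n ⟨u, v, p, hp, hsupp, rfl⟩
    have h1 : p.support.toFinset ⊆ D := fun x hx => hsupp x (List.mem_toFinset.mp hx)
    have h2 : p.support.toFinset.card = p.support.length :=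
      List.toFinset_card_of_nodup hp.support_nodup
    have h3 := Finset.card_le_card h1
    have h4 := p.length_support
    omega
  obtain ⟨u, v, p, hp, hsupp, hlen⟩ := Nat.sSup_mem hne hbdd
  have hmax : ∀ n ∈ S, n ≤ p.length := fun n hn => hlen ▸ le_csSup hbdd hn
  refine ⟨u, hsupp u p.start_mem_support, ?_⟩
  have key : ∀ w ∈ D, ∀ w' ∈ D, G.Adj u w → G.Adj u w' → w = w' := by
    clear hlen
    cases p with
    | nil =>
      intro w hw _ _ hadj _
      exfalso
      have h1 : (Walk.cons hadj Walk.nil).IsPath := by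
        simp [Walk.cons_isPath_iff, hadj.ne]
      have : (1 : ℕ) ∈ S := ⟨u, w, Walk.cons hadj Walk.nil, h1, by
        intro x hx
        simp only [Walk.support_cons, Walk.support_nil, List.mem_cons, List.mem_singleton] at hx
        rcases hx with rfl | rfl | h
        · exact hsupp _ (Walk.start_mem_support _)
        · exact hw
        · simp at h, rfl⟩
      have := hmax 1 this
      simp at this
    | cons h q =>
      rename_i x
      have claim : ∀ w ∈ D, G.Adj u w → w = x := by
        intro w hw hadj
        by_contra hne'
        by_cases hmem : w ∈ (Walk.cons h q).support
        · have hup : ((Walk.cons h q).takeUntil w hmem).IsPath := hp.takeUntil _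
          have hcyc : (Walk.cons hadj ((Walk.cons h q).takeUntil w hmem).reverse).IsCycle := by
            rw [Walk.cons_isCycle_iff]
            refine ⟨hup.reverse, ?_⟩
            rw [Walk.edges_reverse, List.mem_reverse]
            intro hmem'
            have hsub := Walk.edges_takeUntil_subset (Walk.cons h q) hmem
            have h2 : s(u, w) ∈ (Walk.cons h q).edges := hsub hmem'
            rw [Walk.edges_cons, List.mem_cons] at h2
            rcases h2 with h' | h'
            · exact hne' (Sym2.congr_right.mp h')
            · have : u ∈ q.support := Walk.fst_mem_support_of_mem_edges q h'
              exact ((Walk.cons_isPath_iff _ _).mp hp).2 this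
          exact hG _ hcyc
        · have h1 : (Walk.cons hadj.symm (Walk.cons h q)).IsPath := by
            rw [Walk.cons_isPath_iff]; exact ⟨hp, hmem⟩
          have h2 : ((Walk.cons h q).length + 1 : ℕ) ∈ S :=
            ⟨w, v, Walk.cons hadj.symm (Walk.cons h q), h1, by
              intro x hx
              rw [Walk.support_cons, List.mem_cons] at hx
              rcases hx with rfl | hx
              · exact hw
              · exact hsupp x hx, by simp⟩
          have := hmax _ h2
          omega
      intro w hw w' hw' hadj hadj'
      rw [claim w hw hadj, claim w' hw' hadj']
  exact key

lemma ES_card_lt [DecidableEq V] (hG : G.IsAcyclic) :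
    ∀ D : Finset V, D.Nonempty → (ES G D).ncard + 1 ≤ D.card := by
  intro D
  induction D using Finset.strongInduction with
  | _ D ih =>
    intro hD
    obtain ⟨v, hv, hleaf⟩ := exists_leaf hG D hD
    have hsub : ∀ e ∈ ES G D, e ∈ ES G (D.erase v) ∨ ∃ w, G.Adj v w ∧ w ∈ D ∧ e = s(v, w) := by
      intro e he; rw [mem_ES] at he; obtain ⟨x, y, rfl, hxy, hx, hy⟩ := he
      by_cases hxv : x = v
      · subst hxv; exact Or.inr ⟨y, hxy, hy, rfl⟩
      · by_cases hyv : y = v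
        · subst hyv; exact Or.inr ⟨x, hxy.symm, hx, Sym2.eq_swap⟩
        · exact Or.inl (mem_ES.mpr ⟨x, y, rfl, hxy,
            Finset.mem_erase.mpr ⟨hxv, hx⟩, Finset.mem_erase.mpr ⟨hyv, hy⟩⟩)
    have hcard1 : 1 ≤ D.card := Finset.card_pos.mpr hD
    have h3 : (D.erase v).card = D.card - 1 := Finset.card_erase_of_mem hv
    by_cases hnb : ∃ w ∈ D, G.Adj v w
    · obtain ⟨w₀, hw₀D, hw₀⟩ := hnb
      have hsub2 : ES G D ⊆ insert s(v, w₀) (ES G (D.erase v)) := by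
        intro e he
        rcases hsub e he with h | ⟨w, hw, hwD, rfl⟩
        · exact Set.mem_insert_of_mem _ h
        · rw [hleaf w hwD w₀ hw₀D hw hw₀]; exact Set.mem_insert _ _
      have h1 : (ES G D).ncard ≤ (ES G (D.erase v)).ncard + 1 :=
        le_trans (Set.ncard_le_ncard hsub2 ((ES_finite _).insert _)) (Set.ncard_insert_le _ _)
      rcases (D.erase v).eq_empty_or_nonempty with he | hne
      · exfalso
        have h4 : w₀ ∈ D.erase v := Finset.mem_erase.mpr ⟨hw₀.ne', hw₀D⟩
        rw [he] at h4; simp at h4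
      · have h2 := ih (D.erase v) (Finset.erase_ssubset hv) hne
        omega
    · push_neg at hnb
      have hsub2 : ES G D ⊆ ES G (D.erase v) := by
        intro e he
        rcases hsub e he with h | ⟨w, hw, hwD, rfl⟩
        · exact h
        · exact absurd hw (hnb w hwD)
      rcases (D.erase v).eq_empty_or_nonempty with he | hne
      · have hE : (ES G D).ncard = 0 := by
          have hempty : ES G (D.erase v) = ∅ := by
            rw [he]; ext e; rw [mem_ES]; simp
          rw [Set.ncard_eq_zero (ES_finite D)]
          rw [hempty] at hsub2
          exact Set.subset_empty_iff.mp hsub2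
        omega
      · have h2 := ih (D.erase v) (Finset.erase_ssubset hv) hne
        have h1 : (ES G D).ncard ≤ (ES G (D.erase v)).ncard :=
          Set.ncard_le_ncard hsub2 (ES_finite _)
        omega

lemma closedIn_iff [DecidableEq V] (hG : G.IsAcyclic) (A : Finset V) :
    ClosedIn G A ↔ ∀ x ∈ A, ∀ y, y ∉ A → ¬ G.Adj x y := by
  constructor
  · intro h x hx y hyA hxy
    have hclosed := (h (insert y A) (Finset.subset_insert y A)).2 (insert y A)
      (Finset.ssubset_insert hyA) (subset_refl _)
    have hmemC : s(x, y) ∈ ES G (insert y A) :=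
      mem_ES.mpr ⟨x, y, rfl, hxy, Finset.mem_insert_of_mem hx, Finset.mem_insert_self y A⟩
    have hnot : s(x, y) ∉ ES G A := by
      intro hmem
      rw [mem_ES] at hmem
      obtain ⟨x', y', heq, _, hx', hy'⟩ := hmem
      rw [Sym2.eq_iff] at heq
      rcases heq with ⟨rfl, rfl⟩ | ⟨rfl, rfl⟩
      · exact hyA hy'
      · exact hyA hx'
    have hsub : insert s(x, y) (ES G A) ⊆ ES G (insert y A) :=
      Set.insert_subset hmemC (ES_mono (Finset.subset_insert y A))
    have h1 : (ES G A).ncard + 1 ≤ (ES G (insert y A)).ncard := by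
      rw [← Set.ncard_insert_of_notMem hnot (ES_finite A)]
      exact Set.ncard_le_ncard hsub (ES_finite _)
    have h2 : (insert y A).card = A.card + 1 := Finset.card_insert_of_notMem hyA
    rw [delta_eq_s15, delta_eq_s15] at hclosed
    omega
  · intro h B hAB
    refine ⟨hAB, ?_⟩
    intro C hAC _
    have hDne : (C \ A).Nonempty := by
      rw [Finset.sdiff_nonempty]
      exact hAC.not_subset
    have hsplit : ES G C ⊆ ES G A ∪ ES G (C \ A) := by
      intro e he
      rw [mem_ES] at he
      obtain ⟨x, y, rfl, hxy, hx, hy⟩ := he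
      by_cases hxA : x ∈ A
      · by_cases hyA : y ∈ A
        · exact Or.inl (mem_ES.mpr ⟨x, y, rfl, hxy, hxA, hyA⟩)
        · exact absurd hxy (h x hxA y hyA)
      · by_cases hyA : y ∈ A
        · exact absurd hxy.symm (h y hyA x hxA)
        · exact Or.inr (mem_ES.mpr ⟨x, y, rfl, hxy,
            Finset.mem_sdiff.mpr ⟨hx, hxA⟩, Finset.mem_sdiff.mpr ⟨hy, hyA⟩⟩)
    have e1 : (ES G C).ncard ≤ (ES G A).ncard + (ES G (C \ A)).ncard :=
      le_trans (Set.ncard_le_ncard hsplit ((ES_finite _).union (ES_finite _)))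
        (Set.ncard_union_le _ _)
    have e2 : (ES G (C \ A)).ncard + 1 ≤ (C \ A).card := ES_card_lt hG _ hDne
    have e3 : (C \ A).card + A.card = C.card :=
      Finset.card_sdiff_add_card_eq_card hAC.subset
    rw [delta_eq_s15, delta_eq_s15]
    omega

lemma gammaStar_realize_iff {m : ℕ} (a : Fin m → V) :
    (@FirstOrder.Language.Formula.Realize FirstOrder.Language.graph V G.structure (Fin m)
        (gammaStar m) a) ↔ ∀ y : V, (∀ i, y ≠ a i) → ∀ i, ¬ G.Adj (a i) y := by
  letI := G.structure
  have hadj : ∀ (x y : V), @FirstOrder.Language.Structure.RelMap FirstOrder.Language.graph V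
      G.structure 2 adj ![x, y] ↔ G.Adj x y := by
    intro x y
    show G.Adj (![x, y] 0) (![x, y] 1) ↔ _
    simp
  simp [gammaStar, Formula.Realize, realize_finsetIInf,
    BoundedFormula.realize_rel₂, hadj, Fin.snoc, Function.comp]

end Aux

/-- for every forest `M` (viewed as a structure in the language of graphs)
and every `m`-tuple `ā` of its vertices, `M ⊨ γ*_m(ā)` iff the set of entries of `ā`
is closed in `M` (`ā ≤* M`). -/
theorem stmt_15 (m : ℕ) (V : Type*) [DecidableEq V] (G : SimpleGraph V)
    (hG : G.IsAcyclic) (a : Fin m → V) :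
    (@FirstOrder.Language.Formula.Realize Language.graph V G.structure (Fin m)
        (gammaStar m) a) ↔
      ClosedIn G (Finset.univ.image a) := by
  rw [gammaStar_realize_iff, closedIn_iff hG]
  constructor
  · intro h x hxA y hyA hxy
    obtain ⟨i, _, rfl⟩ := Finset.mem_image.mp hxA
    have hy : ∀ j, y ≠ a j := by
      intro j he
      exact hyA (Finset.mem_image.mpr ⟨j, Finset.mem_univ j, he.symm⟩)
    exact h y hy i hxy
  · intro h y hy i hadj
    have hyA : y ∉ Finset.univ.image a := by
      intro hmem
      obtain ⟨j, _, hj⟩ := Finset.mem_image.mp hmem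
      exact hy j hj.symm
    exact h (a i) (Finset.mem_image.mpr ⟨i, Finset.mem_univ i, rfl⟩) y hyA hadj
end
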